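/- If ξ < f*(0) and the projection of (ξ, 0) onto the closed convex set epi f* is the point (ξ_p, g_p) with ξ_p = ξ (no vertical progress), then the line ℝ × {0} is strictly separated from epi f*, contradicting 0 ∈ dom f*. Hence if 0 ∈ dom f*, then ξ_p > ξ strictly. -/

import Mathlib

open scoped RealInnerProductSpace
open Filter

variable {E : Type*} [NormedAddCommGroup E] [InnerProductSpace ℝ E] [FiniteDimensional ℝ E]

/-- Fenchel conjugate `f*(g) = sup_x (g·x - f x)` (real-valued supremum). -/
noncomputable def conj (f : E → ℝ) (g : E) : ℝ := ⨆ x, (⟪g, x⟫ - f x)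

/-- Subdifferential of a finite convex function. -/
def subdiff (f : E → ℝ) (x : E) : Set E := {g | ∀ y, f y - f x ≥ ⟪g, y - x⟫}

/-- Epigraph of the conjugate function: `{(μ, g) : μ ≥ f*(g)}` (including the
domain condition, correct even where `f* = +∞`). -/
def epiConj (f : E → ℝ) : Set (ℝ × E) := {p | ∀ x, ⟪p.2, x⟫ - f x ≤ p.1}

/-- Subdifferential of the conjugate `f*` at `g₀`: `x` with
`f*(g) ≥ f*(g₀) + x·(g - g₀)` for all `g` (stated via upper bounds `μ ≥ f*(g)`). -/
def subdiffConj (f : E → ℝ) (g₀ : E) : Set E :=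
  {x | ∀ p ∈ epiConj f, p.1 - conj f g₀ ≥ ⟪x, p.2 - g₀⟫}

/-- Directional derivative of the conjugate: `∂f*(g₀; d) = sup_{x ∈ ∂f*(g₀)} x·d`. -/
noncomputable def dirDConj (f : E → ℝ) (g₀ d : E) : ℝ :=
  sSup ((fun x => ⟪x, d⟫) '' subdiffConj f g₀)

/-- Directional derivative of a finite convex function `h`:
`∂h(g; d) = sup_{x ∈ ∂h(g)} x·d`. -/
noncomputable def dirD (h : E → ℝ) (g d : E) : ℝ :=
  sSup ((fun x => ⟪x, d⟫) '' subdiff h g)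

/-- if 0 ∈ dom f*, the projection of (ξ, 0), ξ < f*(0), onto
epi f* satisfies ξ_p > ξ strictly (ξ_p = ξ would strictly separate ℝ × {0}
from epi f*, contradicting 0 ∈ dom f*). -/
theorem proj_strictly_above_of_zero_mem_dom
    (f : E → ℝ) (hf : ConvexOn ℝ Set.univ f)
    (hdom : ∃ μ : ℝ, (μ, (0 : E)) ∈ epiConj f)
    (ξ ξp : ℝ) (gp : E) (hξ : ξ < conj f 0)
    (hepi : (ξp, gp) ∈ epiConj f)
    (hopt : ∀ p ∈ epiConj f, (ξp - ξ) * (p.1 - ξp) + ⟪gp, p.2 - gp⟫ ≥ 0)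
    (hproj : ∀ p ∈ epiConj f,
      (ξp - ξ) ^ 2 + ‖gp‖ ^ 2 ≤ (p.1 - ξ) ^ 2 + ‖p.2‖ ^ 2) :
    ξ < ξp := by
  by_contra h
  push_neg at h
  obtain ⟨μ, hμ⟩ := hdom
  -- members (μ + t, 0) of the epigraph for t ≥ 0
  have hmem : ∀ t : ℝ, 0 ≤ t → (μ + t, (0 : E)) ∈ epiConj f := by
    intro t ht x
    have := hμ x
    simp only at this ⊢
    linarith
  set c := ξp - ξ with hc
  have hc0 : c ≤ 0 := by simp [hc]; linarith
  rcases lt_or_eq_of_le hc0 with hlt | heq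
  · -- c < 0 : take t large
    set t := max 0 (ξp - μ + (‖gp‖ ^ 2 + 1) / (-c)) with ht
    have ht0 : 0 ≤ t := le_max_left _ _
    have hkey := hopt _ (hmem t ht0)
    simp only at hkey
    have hinner : ⟪gp, (0 : E) - gp⟫ = -‖gp‖ ^ 2 := by
      simp [inner_sub_right, real_inner_self_eq_norm_sq]
    rw [hinner] at hkey
    have hbig : μ + t - ξp ≥ (‖gp‖ ^ 2 + 1) / (-c) := by
      have : t ≥ ξp - μ + (‖gp‖ ^ 2 + 1) / (-c) := le_max_right _ _
      linarith
    have hcneg : (0:ℝ) < -c := by linarith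
    have : c * (μ + t - ξp) ≤ c * ((‖gp‖ ^ 2 + 1) / (-c)) := by
      apply mul_le_mul_of_nonpos_left hbig (le_of_lt hlt)
    have heq2 : c * ((‖gp‖ ^ 2 + 1) / (-c)) = -(‖gp‖ ^ 2 + 1) := by
      field_simp
      rw [div_self hlt.ne]
    nlinarith [sq_nonneg ‖gp‖]
  · -- c = 0 : gp = 0 and conj f 0 ≤ ξp = ξ, contradiction
    have hkey := hopt _ (hmem 0 le_rfl)
    simp only at hkey
    have hinner : ⟪gp, (0 : E) - gp⟫ = -‖gp‖ ^ 2 := by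
      simp [inner_sub_right, real_inner_self_eq_norm_sq]
    rw [hinner] at hkey
    have hgp : gp = 0 := by
      have : ‖gp‖ ^ 2 ≤ 0 := by rw [heq] at hkey; nlinarith [hkey]
      have : ‖gp‖ = 0 := by nlinarith [norm_nonneg gp]
      exact norm_eq_zero.mp this
    have hle : conj f 0 ≤ ξp := by
      apply ciSup_le
      intro x
      have := hepi x
      rw [hgp] at this
      simpa using this
    linarith [heq.symm, hc]
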